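/- The function σ : ℍ × ℍ → ℝ defined by σ(q,p) = |q - p| if p and q lie on the same complex slice ℝ + Iℝ for some imaginary unit I, and σ(q,p) = √((Re q - Re p)² + (|Im q| + |Im p|)²) otherwise, is a metric on the quaternions ℍ. -/

import Mathlib

open Quaternion

/-- Two quaternions lie on the same complex slice `ℝ + Iℝ` for some imaginary unit `I`. -/
def sameSlice (p q : ℍ[ℝ]) : Prop :=
  ∃ I : ℍ[ℝ], I ^ 2 = -1 ∧ (∃ x y : ℝ, p = (x : ℍ[ℝ]) + y • I) ∧
    (∃ x y : ℝ, q = (x : ℍ[ℝ]) + y • I)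

open Classical in
/-- The slice distance σ. -/
noncomputable def sliceSigma (q p : ℍ[ℝ]) : ℝ :=
  if sameSlice p q then ‖q - p‖
  else Real.sqrt ((q.re - p.re) ^ 2 + (‖q.im‖ + ‖p.im‖) ^ 2)

/- ### Auxiliary lemmas -/

noncomputable def psiC (q : ℍ[ℝ]) : ℂ := ⟨q.re, ‖q.im‖⟩

lemma quat_norm_sq_eq (a : ℍ[ℝ]) : ‖a‖ ^ 2 = a.re ^ 2 + ‖a.im‖ ^ 2 := by
  have h1 : ‖a‖ ^ 2 = normSq a := by rw [sq, ← Quaternion.normSq_eq_norm_mul_self]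
  have h2 : ‖a.im‖ ^ 2 = normSq a.im := by rw [sq, ← Quaternion.normSq_eq_norm_mul_self]
  rw [h1, h2, Quaternion.normSq_def', Quaternion.normSq_def']
  simp only [Quaternion.re_im, Quaternion.imI_im, Quaternion.imJ_im, Quaternion.imK_im]
  ring

lemma quat_norm_eq_sqrt (a : ℍ[ℝ]) : ‖a‖ = Real.sqrt (a.re ^ 2 + ‖a.im‖ ^ 2) := by
  rw [← quat_norm_sq_eq, Real.sqrt_sq (norm_nonneg a)]

lemma unit_re {I : ℍ[ℝ]} (hI : I ^ 2 = -1) : I.re = 0 := by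
  rw [sq] at hI
  have hre : I.re * I.re - I.imI * I.imI - I.imJ * I.imJ - I.imK * I.imK = -1 := by
    have := congrArg QuaternionAlgebra.re hI
    simpa [Quaternion.re_mul] using this
  have hi : I.re * I.imI + I.imI * I.re + I.imJ * I.imK - I.imK * I.imJ = 0 := by
    have := congrArg QuaternionAlgebra.imI hI
    simpa [Quaternion.imI_mul] using this
  have hj : I.re * I.imJ - I.imI * I.imK + I.imJ * I.re + I.imK * I.imI = 0 := by
    have := congrArg QuaternionAlgebra.imJ hI
    simpa [Quaternion.imJ_mul] using this
  have hk : I.re * I.imK + I.imI * I.imJ - I.imJ * I.imI + I.imK * I.re = 0 := by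
    have := congrArg QuaternionAlgebra.imK hI
    simpa [Quaternion.imK_mul] using this
  have key : I.re * (I.re ^ 2 + 1) = 0 := by
    linear_combination I.re * hre + (I.imI / 2) * hi + (I.imJ / 2) * hj + (I.imK / 2) * hk
  have h5 : I.re ^ 2 + 1 ≠ 0 := by positivity
  exact (mul_eq_zero.mp key).resolve_right h5

lemma unit_im {I : ℍ[ℝ]} (hI : I ^ 2 = -1) : I.im = I := by
  conv_rhs => rw [← Quaternion.re_add_im I, unit_re hI]
  simp

lemma slice_im {I : ℍ[ℝ]} (hI : I ^ 2 = -1) (x y : ℝ) :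
    ((x : ℍ[ℝ]) + y • I).im = y • I := by
  rw [Quaternion.im_add, Quaternion.im_coe, Quaternion.im_smul, unit_im hI, zero_add]

lemma exists_unit (q : ℍ[ℝ]) : ∃ I : ℍ[ℝ], I ^ 2 = -1 ∧ ∃ x y : ℝ, q = (x : ℍ[ℝ]) + y • I := by
  by_cases hq : q.im = 0
  · refine ⟨(id ⟨0, 1, 0, 0⟩ : ℍ[ℝ]), ?_, q.re, 0, ?_⟩
    · ext <;> simp [sq, Quaternion.re_mul, Quaternion.imI_mul, Quaternion.imJ_mul,
        Quaternion.imK_mul] <;> simp [id]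
    · rw [zero_smul, add_zero]
      conv_lhs => rw [← Quaternion.re_add_im q, hq, add_zero]
  · have hne : ‖q.im‖ ≠ 0 := norm_ne_zero_iff.mpr hq
    refine ⟨‖q.im‖⁻¹ • q.im, ?_, q.re, ‖q.im‖, ?_⟩
    · have hn : (normSq q.im : ℝ) = ‖q.im‖ ^ 2 := by
        rw [Quaternion.normSq_eq_norm_mul_self, sq]
      rw [smul_pow, Quaternion.im_sq, hn]
      have hcoe : ((‖q.im‖ ^ 2 : ℝ) : ℍ[ℝ]) = (‖q.im‖ ^ 2 : ℝ) • (1 : ℍ[ℝ]) := by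
        ext <;> simp [← Quaternion.coe_pow]
      rw [hcoe, smul_neg, smul_smul, inv_pow]
      rw [inv_mul_cancel₀ (by positivity : ‖q.im‖ ^ 2 ≠ 0), one_smul]
    · rw [smul_smul, mul_inv_cancel₀ hne, one_smul, Quaternion.re_add_im]

lemma sameSlice_comm {p q : ℍ[ℝ]} (h : sameSlice p q) : sameSlice q p := by
  obtain ⟨I, h1, h2, h3⟩ := h; exact ⟨I, h1, h3, h2⟩

lemma sameSlice_refl (q : ℍ[ℝ]) : sameSlice q q := by
  obtain ⟨I, hI, hx⟩ := exists_unit q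
  exact ⟨I, hI, hx, hx⟩

lemma sameSlice_of_im_zero {p : ℍ[ℝ]} (hp : p.im = 0) (q : ℍ[ℝ]) : sameSlice p q := by
  obtain ⟨I, hI, x, y, hq⟩ := exists_unit q
  refine ⟨I, hI, ⟨p.re, 0, ?_⟩, x, y, hq⟩
  rw [zero_smul, add_zero]
  conv_lhs => rw [← Quaternion.re_add_im p, hp, add_zero]

lemma sameSlice_trans {p q r : ℍ[ℝ]} (hp : p.im ≠ 0) (h1 : sameSlice p q)
    (h2 : sameSlice p r) : sameSlice q r := by
  obtain ⟨I, hI, ⟨x, y, hpI⟩, hq⟩ := h1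
  obtain ⟨J, hJ, ⟨a, b, hpJ⟩, a', b', hr⟩ := h2
  have hyI : p.im = y • I := by rw [hpI, slice_im hI]
  have hbJ : p.im = b • J := by rw [hpJ, slice_im hJ]
  have hb : b ≠ 0 := fun h => hp (by rw [hbJ, h, zero_smul])
  have hJI : J = (b⁻¹ * y) • I := by
    rw [mul_smul, ← hyI, hbJ, smul_smul, inv_mul_cancel₀ hb, one_smul]
  exact ⟨I, hI, hq, a', b' * (b⁻¹ * y), by rw [hr, hJI, smul_smul]⟩

lemma abs_psi_sub (q p : ℍ[ℝ]) :
    ‖psiC q - psiC p‖ = Real.sqrt ((q.re - p.re) ^ 2 + (‖q.im‖ - ‖p.im‖) ^ 2) := by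
  rw [Complex.norm_def, Complex.normSq_apply]
  simp only [Complex.sub_re, Complex.sub_im, psiC]
  congr 1; ring

lemma abs_psi_sub_conj (q p : ℍ[ℝ]) :
    ‖psiC q - (starRingEnd ℂ) (psiC p)‖ =
      Real.sqrt ((q.re - p.re) ^ 2 + (‖q.im‖ + ‖p.im‖) ^ 2) := by
  rw [Complex.norm_def, Complex.normSq_apply]
  simp only [Complex.sub_re, Complex.sub_im, Complex.conj_re, Complex.conj_im, psiC]
  congr 1; ring

lemma psi_sub_le (q p : ℍ[ℝ]) : ‖psiC q - psiC p‖ ≤ ‖q - p‖ := by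
  conv_rhs => rw [quat_norm_eq_sqrt]
  rw [abs_psi_sub]
  apply Real.sqrt_le_sqrt
  simp only [Quaternion.re_sub, Quaternion.im_sub]
  have h : |‖q.im‖ - ‖p.im‖| ≤ ‖q.im - p.im‖ := abs_norm_sub_norm_le _ _
  have h2 : (‖q.im‖ - ‖p.im‖) ^ 2 ≤ ‖q.im - p.im‖ ^ 2 := by
    rw [← sq_abs]; exact pow_le_pow_left₀ (abs_nonneg _) h 2
  linarith

lemma norm_le_abs_conj (q p : ℍ[ℝ]) :
    ‖q - p‖ ≤ ‖psiC q - (starRingEnd ℂ) (psiC p)‖ := by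
  conv_lhs => rw [quat_norm_eq_sqrt]
  rw [abs_psi_sub_conj]
  apply Real.sqrt_le_sqrt
  simp only [Quaternion.re_sub, Quaternion.im_sub]
  have h : ‖q.im - p.im‖ ≤ ‖q.im‖ + ‖p.im‖ := norm_sub_le _ _
  have h2 : ‖q.im - p.im‖ ^ 2 ≤ (‖q.im‖ + ‖p.im‖) ^ 2 :=
    pow_le_pow_left₀ (norm_nonneg _) h 2
  linarith

lemma sigma_of_slice {p q : ℍ[ℝ]} (h : sameSlice p q) : sliceSigma q p = ‖q - p‖ := by
  rw [sliceSigma, if_pos h]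

lemma sigma_of_not {p q : ℍ[ℝ]} (h : ¬ sameSlice p q) :
    sliceSigma q p = ‖psiC q - (starRingEnd ℂ) (psiC p)‖ := by
  rw [sliceSigma, if_neg h, abs_psi_sub_conj]

lemma norm_le_sigma (q p : ℍ[ℝ]) : ‖q - p‖ ≤ sliceSigma q p := by
  by_cases h : sameSlice p q
  · rw [sigma_of_slice h]
  · rw [sigma_of_not h]; exact norm_le_abs_conj q p

lemma psi_le_sigma (q p : ℍ[ℝ]) : ‖psiC q - psiC p‖ ≤ sliceSigma q p :=
  (psi_sub_le q p).trans (norm_le_sigma q p)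

theorem sigma_is_metric :
    (∀ q p : ℍ[ℝ], sliceSigma q p = 0 ↔ q = p) ∧
    (∀ q p : ℍ[ℝ], sliceSigma q p = sliceSigma p q) ∧
    (∀ q p r : ℍ[ℝ], sliceSigma q r ≤ sliceSigma q p + sliceSigma p r) := by
  refine ⟨?_, ?_, ?_⟩
  · intro q p
    constructor
    · intro h
      by_cases hs : sameSlice p q
      · rw [sigma_of_slice hs] at h
        exact sub_eq_zero.mp (norm_eq_zero.mp h)
      · exfalso
        rw [sliceSigma, if_neg hs] at h
        have hle : (q.re - p.re) ^ 2 + (‖q.im‖ + ‖p.im‖) ^ 2 ≤ 0 :=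
          Real.sqrt_eq_zero'.mp h
        have hp : ‖p.im‖ ≤ 0 := by
          nlinarith [sq_nonneg (q.re - p.re), norm_nonneg q.im, norm_nonneg p.im,
            mul_nonneg (norm_nonneg q.im) (norm_nonneg p.im)]
        have : p.im = 0 := norm_eq_zero.mp (le_antisymm hp (norm_nonneg _))
        exact hs (sameSlice_of_im_zero this q)
    · rintro rfl
      rw [sigma_of_slice (sameSlice_refl q), sub_self, norm_zero]
  · intro q p
    by_cases h : sameSlice p q
    · rw [sigma_of_slice h, sigma_of_slice (sameSlice_comm h), norm_sub_rev]
    · have h' : ¬ sameSlice q p := fun hh => h (sameSlice_comm hh)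
      rw [sliceSigma, if_neg h, sliceSigma, if_neg h']
      congr 1; ring
  · intro q p r
    by_cases hqr : sameSlice r q
    · rw [sigma_of_slice hqr]
      calc ‖q - r‖ ≤ ‖q - p‖ + ‖p - r‖ := by
              simpa [dist_eq_norm] using dist_triangle q p r
        _ ≤ sliceSigma q p + sliceSigma p r :=
              add_le_add (norm_le_sigma q p) (norm_le_sigma p r)
    · rw [sigma_of_not hqr]
      by_cases h1 : sameSlice p q
      · by_cases h2 : sameSlice r p
        · by_cases hp : p.im = 0
          · rw [sigma_of_slice h1, sigma_of_slice h2]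
            have hB : (psiC p).im = 0 := by simp [psiC, hp]
            have hconj : (starRingEnd ℂ) (psiC p) = psiC p := Complex.conj_eq_iff_im.mpr hB
            have key : ‖psiC p - (starRingEnd ℂ) (psiC r)‖ ≤ ‖p - r‖ := by
              have : psiC p - (starRingEnd ℂ) (psiC r) =
                  (starRingEnd ℂ) (psiC p - psiC r) := by rw [map_sub, hconj]
              rw [this, Complex.norm_conj]
              exact psi_sub_le p r
            calc ‖psiC q - (starRingEnd ℂ) (psiC r)‖
                ≤ ‖psiC q - psiC p‖ +
                    ‖psiC p - (starRingEnd ℂ) (psiC r)‖ :=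
                  norm_sub_le_norm_sub_add_norm_sub _ _ _
              _ ≤ ‖q - p‖ + ‖p - r‖ := add_le_add (psi_sub_le q p) key
          · exact absurd (sameSlice_comm (sameSlice_trans hp h1 (sameSlice_comm h2))) hqr
        · rw [sigma_of_slice h1, sigma_of_not h2]
          calc ‖psiC q - (starRingEnd ℂ) (psiC r)‖
              ≤ ‖psiC q - psiC p‖ +
                  ‖psiC p - (starRingEnd ℂ) (psiC r)‖ :=
                norm_sub_le_norm_sub_add_norm_sub _ _ _
            _ ≤ ‖q - p‖ + ‖psiC p - (starRingEnd ℂ) (psiC r)‖ :=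
                add_le_add_left (psi_sub_le q p) _
      · rw [sigma_of_not h1]
        have key : ‖(starRingEnd ℂ) (psiC p) - (starRingEnd ℂ) (psiC r)‖ ≤
            sliceSigma p r := by
          rw [← map_sub, Complex.norm_conj]
          exact psi_le_sigma p r
        calc ‖psiC q - (starRingEnd ℂ) (psiC r)‖
            ≤ ‖psiC q - (starRingEnd ℂ) (psiC p)‖ +
                ‖(starRingEnd ℂ) (psiC p) - (starRingEnd ℂ) (psiC r)‖ :=
              norm_sub_le_norm_sub_add_norm_sub _ _ _
          _ ≤ ‖psiC q - (starRingEnd ℂ) (psiC p)‖ + sliceSigma p r :=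
              add_le_add_right key _
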